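/- Let k ≥ 2. Define ℬ_k = {α(d/(k²−1), dk/(k²−1)) : d ∈ ℤ} and 𝒞_k = {α(d/(k²+k+1), dk/(k²+k+1)) : d ∈ ℤ}. Then |ℬ_k| = ((k²−1) + (k−1))/2 and |𝒞_k| = ((k²+k+1) + 2·gcd(k−1,3))/3. -/

import Mathlib

open Complex Polynomial

set_option linter.unusedSectionVars false

/-- `α(σ,τ) = e^{2πiσ} + e^{2πiτ} + e^{-2πi(σ+τ)}`. -/
noncomputable def alpha (σ τ : ℝ) : ℂ :=
  Complex.exp (2 * Real.pi * Complex.I * σ) + Complex.exp (2 * Real.pi * Complex.I * τ) +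
    Complex.exp (-(2 * Real.pi * Complex.I * (σ + τ)))


noncomputable def EE (n : ℕ) (a : ℤ) : ℂ := Complex.exp (2 * Real.pi * Complex.I * a / n)

lemma EE_add (n : ℕ) (a b : ℤ) : EE n a * EE n b = EE n (a + b) := by
  rw [EE, EE, EE, ← Complex.exp_add]; congr 1; push_cast; ring

lemma EE_zero (n : ℕ) : EE n 0 = 1 := by simp [EE]

lemma EE_mul_self (n : ℕ) (hn : n ≠ 0) (c : ℤ) : EE n (n * c) = 1 := by
  have hnC : (n : ℂ) ≠ 0 := Nat.cast_ne_zero.2 hn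
  rw [EE, show ((2:ℂ) * Real.pi * Complex.I * ((n * c : ℤ) : ℂ) / n) = c * (2 * Real.pi * Complex.I) by push_cast; field_simp]
  exact Complex.exp_int_mul_two_pi_mul_I c

lemma EE_congr {n : ℕ} (hn : n ≠ 0) {a b : ℤ} (h : a ≡ b [ZMOD n]) : EE n a = EE n b := by
  obtain ⟨c, hc⟩ := h.dvd
  have hb : a = b + n * (-c) := by linarith [hc]
  rw [hb, ← EE_add, EE_mul_self n hn, mul_one]

lemma EE_inj {n : ℕ} (hn : n ≠ 0) {a b : ℤ} (h : EE n a = EE n b) : a ≡ b [ZMOD n] := by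
  rw [EE, EE, Complex.exp_eq_exp_iff_exists_int] at h
  obtain ⟨m, hm⟩ := h
  have hπ : (2 : ℂ) * Real.pi * Complex.I ≠ 0 := by
    simp [Real.pi_ne_zero, Complex.I_ne_zero]
  have hnC : (n : ℂ) ≠ 0 := Nat.cast_ne_zero.2 hn
  have h1 : (2 : ℂ) * Real.pi * Complex.I * a = 2 * Real.pi * Complex.I * (b + m * n) := by
    field_simp at hm; linear_combination (2 * Real.pi * Complex.I) * hm
  have h2 : (a : ℂ) = b + m * n := mul_left_cancel₀ hπ h1
  have h3 : a = b + m * n := by exact_mod_cast h2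
  exact Int.ModEq.symm (Int.modEq_iff_dvd.2 ⟨m, by linarith⟩)

lemma EE_conj (n : ℕ) (a : ℤ) : (starRingEnd ℂ) (EE n a) = EE n (-a) := by
  rw [EE, EE, ← Complex.exp_conj]
  congr 1
  simp [map_div₀, map_ofNat]

section eZ
variable {n : ℕ} [NeZero n]

noncomputable def ee (x : ZMod n) : ℂ := EE n (x.val : ℤ)

lemma ee_cast_val (x : ZMod n) : (((x.val : ℤ) : ZMod n)) = x := by
  simp [ZMod.intCast_cast]

lemma ee_int (a : ℤ) : ee ((a : ZMod n)) = EE n a := by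
  apply EE_congr (NeZero.ne n)
  rw [← ZMod.intCast_eq_intCast_iff]
  simp

lemma ee_eq_of_cast {a b : ℤ} (h : ((a : ZMod n)) = (b : ZMod n)) : EE n a = EE n b :=
  EE_congr (NeZero.ne n) ((ZMod.intCast_eq_intCast_iff _ _ _).1 h)

lemma ee_add (x y : ZMod n) : ee (x + y) = ee x * ee y := by
  rw [ee, ee, ee, EE_add]
  apply ee_eq_of_cast
  push_cast
  simp [ee_cast_val]

lemma ee_zero : ee (0 : ZMod n) = 1 := by
  rw [ee]; simp [ZMod.val_zero, EE_zero]

lemma ee_inj : Function.Injective (ee (n := n)) := by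
  intro x y h
  have := EE_inj (NeZero.ne n) h
  rw [← ZMod.intCast_eq_intCast_iff] at this
  rwa [ee_cast_val, ee_cast_val] at this

lemma ee_conj (x : ZMod n) : (starRingEnd ℂ) (ee x) = ee (-x) := by
  rw [ee, ee, EE_conj]
  apply ee_eq_of_cast
  push_cast
  simp [ee_cast_val]

end eZ

section FF
variable {n : ℕ} [NeZero n]

noncomputable def FF (c : ZMod n) (d : ZMod n) : ℂ := ee d + ee (d * c) + ee (-(d * (c + 1)))

lemma cubic_id (a b c : ℂ) : (X - C a) * (X - C b) * (X - C c) =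
    X ^ 3 - C (a + b + c) * X ^ 2 + C (a * b + b * c + c * a) * X - C (a * b * c) := by
  simp only [map_add, map_mul]
  ring

lemma FF_multiset {c d d' : ZMod n} (h : FF c d = FF c d') :
    ({d, d * c, -(d * (c + 1))} : Multiset (ZMod n)) = {d', d' * c, -(d' * (c + 1))} := by
  have prod1 : ∀ x : ZMod n, ee x * ee (x * c) * ee (-(x * (c + 1))) = 1 := by
    intro x
    rw [← ee_add, ← ee_add, show x + x * c + -(x * (c + 1)) = 0 by ring, ee_zero]
  have sym2 : ∀ x : ZMod n, ee x * ee (x * c) + ee (x * c) * ee (-(x * (c + 1)))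
      + ee (-(x * (c + 1))) * ee x = (starRingEnd ℂ) (FF c x) := by
    intro x
    rw [FF, map_add, map_add, ee_conj, ee_conj, ee_conj, ← ee_add, ← ee_add, ← ee_add,
      show x + x * c = -(-(x * (c+1))) by ring, show x * c + -(x * (c + 1)) = -x by ring,
      show -(x * (c + 1)) + x = -(x * c) by ring, neg_neg]
    ring
  apply Multiset.map_injective (ee_inj (n := n))
  have key : ∀ x : ZMod n, ((({x, x * c, -(x * (c + 1))} : Multiset (ZMod n)).map ee).map
      (fun a => X - C a)).prod = X ^ 3 - C (FF c x) * X ^ 2 + C ((starRingEnd ℂ) (FF c x)) * X - C 1 := by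
    intro x
    simp only [Multiset.insert_eq_cons, Multiset.map_cons, Multiset.map_singleton,
      Multiset.prod_cons, Multiset.prod_singleton, ← mul_assoc]
    rw [cubic_id, prod1, ← sym2]
    rfl
  have := congrArg (fun s : ℂ => X ^ 3 - C s * X ^ 2 + C ((starRingEnd ℂ) s) * X - C 1) h
  rw [← key d, ← key d'] at this
  have := congrArg Polynomial.roots this
  rwa [Polynomial.roots_multiset_prod_X_sub_C, Polynomial.roots_multiset_prod_X_sub_C] at this

end FF

section fibers
variable {n : ℕ} [NeZero n]

lemma fiber_B {c : ZMod n} (hc : c ^ 2 = 1) (d d' : ZMod n) :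
    FF c d = FF c d' ↔ d' = d ∨ d' = d * c := by
  constructor
  · intro h
    have M := FF_multiset h
    have hm : d' ∈ ({d', d' * c, -(d' * (c + 1))} : Multiset (ZMod n)) := by simp
    rw [← M] at hm
    simp only [Multiset.insert_eq_cons, Multiset.mem_cons, Multiset.mem_singleton] at hm
    rcases hm with h1 | h1 | h1
    · exact Or.inl h1
    · exact Or.inr h1
    · subst h1
      have hqk : -(d * (c + 1)) * c = -(d * (c + 1)) := by linear_combination (-d) * hc
      rw [hqk] at M
      by_contra hcon
      push_neg at hcon
      obtain ⟨h1, h2⟩ := hcon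
      have hcnt := congrArg (Multiset.count (-(d * (c + 1)))) M
      simp only [Multiset.insert_eq_cons, Multiset.count_cons, Multiset.count_singleton] at hcnt
      rw [if_neg h1, if_neg h2] at hcnt
      split_ifs at hcnt <;> omega
  · intro h
    rcases h with rfl | rfl
    · rfl
    · have h1 : d * c * c = d := by linear_combination d * hc
      have h2 : -(d * c * (c + 1)) = -(d * (c + 1)) := by linear_combination (-d) * hc
      rw [FF, FF, h1, h2]; ring

lemma fiber_C {c : ZMod n} (hc : c ^ 2 + c + 1 = 0) (d d' : ZMod n) :
    FF c d = FF c d' ↔ d' = d ∨ d' = d * c ∨ d' = d * c * c := by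
  have key : ∀ x : ZMod n, -(x * (c + 1)) = x * c * c := by
    intro x; linear_combination (-x) * hc
  constructor
  · intro h
    have M := FF_multiset h
    have hm : d' ∈ ({d', d' * c, -(d' * (c + 1))} : Multiset (ZMod n)) := by simp
    rw [← M] at hm
    simp only [Multiset.insert_eq_cons, Multiset.mem_cons, Multiset.mem_singleton] at hm
    rcases hm with h1 | h1 | h1
    · exact Or.inl h1
    · exact Or.inr (Or.inl h1)
    · exact Or.inr (Or.inr (h1.trans (key d)))
  · intro h
    rcases h with rfl | rfl | rfl
    · rfl
    · have h1 : -(d * c * (c + 1)) = d := by linear_combination (-d) * hc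
      rw [FF, FF, key d, h1]; ring
    · have h1 : d * c * c * c = d := by linear_combination (d * (c - 1)) * hc
      have h2 : -(d * c * c * (c + 1)) = d * c := by linear_combination (-(d * c)) * hc
      rw [FF, FF, key d, h1, h2]; ring

end fibers

lemma card_fix (n m : ℕ) [NeZero n] :
    (Finset.univ.filter (fun x : ZMod n => (m : ZMod n) * x = 0)).card = Nat.gcd m n := by
  classical
  have hn : 0 < n := Nat.pos_of_ne_zero (NeZero.ne n)
  set g := Nat.gcd m n with hg
  have hg0 : 0 < g := Nat.gcd_pos_of_pos_right _ hn
  have hgn : g ∣ n := Nat.gcd_dvd_right m n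
  have hgm : g ∣ m := Nat.gcd_dvd_left m n
  set q := n / g with hq
  have hq0 : 0 < q := Nat.div_pos (Nat.le_of_dvd hn hgn) hg0
  have hnq : n = q * g := by rw [hq, Nat.div_mul_cancel hgn]
  have hcop : Nat.Coprime (m / g) q := Nat.coprime_div_gcd_div_gcd hg0
  have himg : Finset.univ.filter (fun x : ZMod n => (m : ZMod n) * x = 0)
      = Finset.image (fun i : Fin g => ((q * (i : ℕ) : ℕ) : ZMod n)) Finset.univ := by
    ext x
    simp only [Finset.mem_filter, Finset.mem_univ, true_and, Finset.mem_image]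
    constructor
    · intro hx
      have hxv : ((x.val : ℕ) : ZMod n) = x := ZMod.natCast_rightInverse x
      have hdvd : n ∣ m * x.val := by
        rw [← ZMod.natCast_eq_zero_iff, Nat.cast_mul, hxv, hx]
      have hqx : q ∣ x.val := by
        have h1 : q * g ∣ (m / g) * x.val * g := by
          have : (m / g) * x.val * g = m * x.val := by
            rw [mul_comm ((m/g) * x.val) g, ← mul_assoc, Nat.mul_div_cancel' hgm]
          rw [this, ← hnq]; exact hdvd
        have h2 : q ∣ (m / g) * x.val := (Nat.mul_dvd_mul_iff_right hg0).1 h1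
        exact hcop.symm.dvd_of_dvd_mul_left h2
      obtain ⟨t, ht⟩ := hqx
      have htg : t < g := by
        by_contra hc
        push_neg at hc
        have : x.val < n := x.val_lt
        rw [ht, hnq] at this
        exact absurd this (by exact not_lt.2 (Nat.mul_le_mul_left q hc))
      exact ⟨⟨t, htg⟩, by rw [← ht, hxv]⟩
    · rintro ⟨i, rfl⟩
      have hmq : m * q = n * (m / g) := by
        conv_lhs => rw [← Nat.div_mul_cancel hgm]
        rw [hnq]; ring
      rw [← Nat.cast_mul, ZMod.natCast_eq_zero_iff]
      exact ⟨m / g * i, by rw [← mul_assoc, hmq, mul_assoc]⟩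
  rw [himg, Finset.card_image_of_injective _ ?_, Finset.card_univ, Fintype.card_fin]
  intro i j hij
  have hlt : ∀ i : Fin g, q * (i : ℕ) < n := fun i => by
    rw [hnq]; exact (Nat.mul_lt_mul_left hq0).2 i.2
  have := congrArg ZMod.val hij
  rw [ZMod.val_cast_of_lt (hlt i), ZMod.val_cast_of_lt (hlt j)] at this
  exact Fin.ext (Nat.eq_of_mul_eq_mul_left hq0 this)

open Finset in
lemma count_two {α β : Type*} [Fintype α] [DecidableEq α] [DecidableEq β] (f : α → β) (σ : α → α)
    (hσ : ∀ a, σ (σ a) = a) (hf : ∀ a b, f a = f b ↔ b = a ∨ b = σ a) :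
    2 * (Finset.univ.image f).card = Fintype.card α + (Finset.univ.filter fun a => σ a = a).card := by
  classical
  have h1 : (Finset.univ : Finset α).card = ∑ b ∈ Finset.univ.image f,
      (Finset.univ.filter fun a => f a = b).card := Finset.card_eq_sum_card_image f Finset.univ
  have h2 : (Finset.univ.filter fun a => σ a = a).card = ∑ b ∈ Finset.univ.image f,
      ((Finset.univ.filter fun a => σ a = a).filter fun a => f a = b).card :=
    Finset.card_eq_sum_card_fiberwise (fun x _ => Finset.mem_image_of_mem f (Finset.mem_univ x))
  have key : ∀ b ∈ Finset.univ.image f, (Finset.univ.filter fun a => f a = b).card +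
      ((Finset.univ.filter fun a => σ a = a).filter fun a => f a = b).card = 2 := by
    intro b hb
    obtain ⟨a, -, hab⟩ := Finset.mem_image.1 hb
    by_cases hfix : σ a = a
    · have hfib : (Finset.univ.filter fun x => f x = b) = {a} := by
        ext x
        simp only [Finset.mem_filter, Finset.mem_univ, true_and, Finset.mem_singleton]
        rw [← hab, eq_comm (a := f x), hf a x, hfix, or_self]
      have hfib2 : ((Finset.univ.filter fun a => σ a = a).filter fun x => f x = b) = {a} := by
        ext x
        simp only [Finset.mem_filter, Finset.mem_univ, true_and, Finset.mem_singleton]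
        constructor
        · rintro ⟨-, hx⟩
          have := (hf a x).1 (hab ▸ hx.symm)
          rcases this with h | h
          · exact h
          · rw [hfix] at h; exact h
        · rintro rfl; exact ⟨hfix, hab⟩
      rw [hfib, hfib2]; simp
    · have hfib : (Finset.univ.filter fun x => f x = b) = {a, σ a} := by
        ext x
        simp only [Finset.mem_filter, Finset.mem_univ, true_and, Finset.mem_insert,
          Finset.mem_singleton]
        rw [← hab, eq_comm (a := f x), hf a x]
      have hfib2 : ((Finset.univ.filter fun a => σ a = a).filter fun x => f x = b) = ∅ := by
        ext x
        simp only [Finset.mem_filter, Finset.mem_univ, true_and, Finset.notMem_empty,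
          iff_false, not_and]
        intro hx hfx
        rcases (hf a x).1 (hab ▸ hfx.symm) with rfl | rfl
        · exact hfix hx
        · exact hfix (((hσ a).symm.trans hx).symm)
      rw [hfib, hfib2]
      rw [Finset.card_insert_of_notMem (by simpa using fun h => hfix h.symm),
        Finset.card_singleton, Finset.card_empty]
  calc 2 * (Finset.univ.image f).card = ∑ _b ∈ Finset.univ.image f, 2 := by
        rw [Finset.sum_const, smul_eq_mul, mul_comm]
    _ = Fintype.card α + (Finset.univ.filter fun a => σ a = a).card := by
        rw [← Finset.sum_congr rfl key]
        rw [Finset.sum_add_distrib, ← h1, ← h2, Finset.card_univ]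

open Finset in
lemma count_three {α β : Type*} [Fintype α] [DecidableEq α] [DecidableEq β] (f : α → β) (σ : α → α)
    (hσ : ∀ a, σ (σ (σ a)) = a) (hf : ∀ a b, f a = f b ↔ b = a ∨ b = σ a ∨ b = σ (σ a)) :
    3 * (Finset.univ.image f).card
      = Fintype.card α + 2 * (Finset.univ.filter fun a => σ a = a).card := by
  classical
  have h1 : (Finset.univ : Finset α).card = ∑ b ∈ Finset.univ.image f,
      (Finset.univ.filter fun a => f a = b).card := Finset.card_eq_sum_card_image f Finset.univ
  have h2 : (Finset.univ.filter fun a => σ a = a).card = ∑ b ∈ Finset.univ.image f,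
      ((Finset.univ.filter fun a => σ a = a).filter fun a => f a = b).card :=
    Finset.card_eq_sum_card_fiberwise (fun x _ => Finset.mem_image_of_mem f (Finset.mem_univ x))
  have key : ∀ b ∈ Finset.univ.image f, (Finset.univ.filter fun a => f a = b).card +
      2 * ((Finset.univ.filter fun a => σ a = a).filter fun a => f a = b).card = 3 := by
    intro b hb
    obtain ⟨a, -, hab⟩ := Finset.mem_image.1 hb
    by_cases hfix : σ a = a
    · have hfix2 : σ (σ a) = a := by rw [hfix, hfix]
      have hfib : (Finset.univ.filter fun x => f x = b) = {a} := by
        ext x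
        simp only [Finset.mem_filter, Finset.mem_univ, true_and, Finset.mem_singleton]
        rw [← hab, eq_comm (a := f x), hf a x, hfix2, hfix]; tauto
      have hfib2 : ((Finset.univ.filter fun a => σ a = a).filter fun x => f x = b) = {a} := by
        ext x
        simp only [Finset.mem_filter, Finset.mem_univ, true_and, Finset.mem_singleton]
        constructor
        · rintro ⟨-, hx⟩
          rcases (hf a x).1 (hab ▸ hx.symm) with h | h | h
          · exact h
          · rw [hfix] at h; exact h
          · rw [hfix2] at h; exact h
        · rintro rfl; exact ⟨hfix, hab⟩
      rw [hfib, hfib2]; simp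
    · have hne1 : σ (σ a) ≠ σ a := fun h => hfix ((((hσ a).symm.trans (congrArg σ h)).trans h).symm)
      have hne2 : σ (σ a) ≠ a := fun h => hfix ((congrArg σ h).symm.trans (hσ a))
      have hfib : (Finset.univ.filter fun x => f x = b) = {a, σ a, σ (σ a)} := by
        ext x
        simp only [Finset.mem_filter, Finset.mem_univ, true_and, Finset.mem_insert,
          Finset.mem_singleton]
        rw [← hab, eq_comm (a := f x), hf a x]
      have hfib2 : ((Finset.univ.filter fun a => σ a = a).filter fun x => f x = b) = ∅ := by
        ext x
        simp only [Finset.mem_filter, Finset.mem_univ, true_and, Finset.notMem_empty,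
          iff_false, not_and]
        intro hx hfx
        rcases (hf a x).1 (hab ▸ hfx.symm) with rfl | rfl | rfl
        · exact hfix hx
        · exact hne1 hx
        · exact hfix ((congrArg σ ((hσ a).symm.trans hx)).trans (hσ a))
      rw [hfib, hfib2]
      rw [Finset.card_insert_of_notMem (by simp [Ne.symm hfix, Ne.symm hne2]),
        Finset.card_insert_of_notMem (by simpa using hne1.symm),
        Finset.card_singleton, Finset.card_empty]
  calc 3 * (Finset.univ.image f).card = ∑ _b ∈ Finset.univ.image f, 3 := by
        rw [Finset.sum_const, smul_eq_mul, mul_comm]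
    _ = Fintype.card α + 2 * (Finset.univ.filter fun a => σ a = a).card := by
        rw [← Finset.sum_congr rfl key]
        rw [Finset.sum_add_distrib, ← h1, ← Finset.mul_sum, ← h2, Finset.card_univ]

lemma mainB (j : ℕ) :
    (({z : ℂ | ∃ d : ℤ, z = alpha ((d : ℝ) / (((j + 2 : ℕ) : ℝ) ^ 2 - 1))
        ((d * ((j + 2 : ℕ)) : ℝ) / (((j + 2 : ℕ) : ℝ) ^ 2 - 1))}).ncard : ℚ)
      = ((((j + 2 : ℕ) : ℚ)) ^ 2 - 1 + (((j + 2 : ℕ) : ℚ) - 1)) / 2 := by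
  classical
  set N : ℕ := j ^ 2 + 4 * j + 3 with hN
  haveI : NeZero N := ⟨by omega⟩
  set K : ZMod N := ((j + 2 : ℕ) : ZMod N) with hKdef
  have hNC : (N : ℂ) ≠ 0 := Nat.cast_ne_zero.2 (by omega)
  have hNr : (((j + 2 : ℕ) : ℝ) ^ 2 - 1) = (N : ℝ) := by rw [hN]; push_cast; ring
  have hK2 : K ^ 2 = 1 := by
    have h0 : ((N : ℕ) : ZMod N) = 0 := ZMod.natCast_self N
    rw [hN] at h0
    rw [hKdef]
    push_cast at h0 ⊢
    linear_combination h0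
  have alpha_eq : ∀ d : ℤ, alpha ((d : ℝ) / (((j + 2 : ℕ) : ℝ) ^ 2 - 1))
      ((d * ((j + 2 : ℕ)) : ℝ) / (((j + 2 : ℕ) : ℝ) ^ 2 - 1)) = FF K ((d : ZMod N)) := by
    intro d
    rw [alpha, FF, hNr]
    have e1 : ee ((d : ZMod N)) = EE N d := ee_int d
    have e2 : ee ((d : ZMod N) * K) = EE N (d * (j + 2)) := by
      rw [← ee_int (d * (j + 2))]; congr 1; rw [hKdef]; push_cast; ring
    have e3 : ee (-((d : ZMod N) * (K + 1))) = EE N (-(d * (j + 3))) := by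
      rw [← ee_int (-(d * (j + 3)))]; congr 1; rw [hKdef]; push_cast; ring
    rw [e1, e2, e3, EE, EE, EE]
    congr 2
    · push_cast; ring
    · push_cast; ring
    · push_cast; field_simp; ring
  have hrange : {z : ℂ | ∃ d : ℤ, z = alpha ((d : ℝ) / (((j + 2 : ℕ) : ℝ) ^ 2 - 1))
      ((d * ((j + 2 : ℕ)) : ℝ) / (((j + 2 : ℕ) : ℝ) ^ 2 - 1))} = Set.range (FF K) := by
    ext z
    simp only [Set.mem_setOf_eq, Set.mem_range]
    constructor
    · rintro ⟨d, rfl⟩; exact ⟨(d : ZMod N), (alpha_eq d).symm⟩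
    · rintro ⟨x, rfl⟩
      exact ⟨(x.val : ℤ), by rw [alpha_eq, ee_cast_val]⟩
  have hcoe : Set.range (FF K) = ↑(Finset.univ.image (FF K)) := by
    simp [Finset.coe_image]
  rw [hrange, hcoe, Set.ncard_coe_finset]
  -- counting
  have hσ : ∀ a : ZMod N, a * K * K = a := by intro a; linear_combination a * hK2
  have hcard := count_two (FF K) (fun a => a * K) hσ (fun a b => fiber_B hK2 a b)
  have hfilter : (Finset.univ.filter fun a : ZMod N => a * K = a)
      = (Finset.univ.filter fun a : ZMod N => ((j + 1 : ℕ) : ZMod N) * a = 0) := by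
    apply Finset.filter_congr
    intro a _
    have hJ : ((j + 1 : ℕ) : ZMod N) = K - 1 := by rw [hKdef]; push_cast; ring
    rw [hJ]
    constructor <;> intro h <;> linear_combination h
  have hfix : (Finset.univ.filter fun a : ZMod N => a * K = a).card = j + 1 := by
    rw [hfilter, card_fix]
    have : N = (j + 1) * (j + 3) := by rw [hN]; ring
    rw [this]
    exact Nat.gcd_eq_left ⟨j + 3, rfl⟩
  rw [ZMod.card, hfix] at hcard
  -- hcard : 2 * card = N + (j+1)
  have hq := congrArg (fun t : ℕ => (t : ℚ)) hcard
  simp only [Nat.cast_mul, Nat.cast_add, Nat.cast_ofNat] at hq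
  have h2 : ((N : ℕ) : ℚ) = (j : ℚ) ^ 2 + 4 * j + 3 := by rw [hN]; push_cast; ring
  rw [eq_div_iff (by norm_num : (2:ℚ) ≠ 0)]
  push_cast at hq ⊢
  linarith

lemma mainC (j : ℕ) :
    (({z : ℂ | ∃ d : ℤ, z = alpha ((d : ℝ) / (((j + 2 : ℕ) : ℝ) ^ 2 + ((j + 2 : ℕ) : ℝ) + 1))
        ((d * ((j + 2 : ℕ)) : ℝ) / (((j + 2 : ℕ) : ℝ) ^ 2 + ((j + 2 : ℕ) : ℝ) + 1))}).ncard : ℚ)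
      = ((((j + 2 : ℕ) : ℚ)) ^ 2 + ((j + 2 : ℕ) : ℚ) + 1
          + 2 * (Nat.gcd (j + 2 - 1) 3 : ℚ)) / 3 := by
  classical
  set N : ℕ := j ^ 2 + 5 * j + 7 with hN
  haveI : NeZero N := ⟨by omega⟩
  set K : ZMod N := ((j + 2 : ℕ) : ZMod N) with hKdef
  have hNC : (N : ℂ) ≠ 0 := Nat.cast_ne_zero.2 (by omega)
  have hNr : (((j + 2 : ℕ) : ℝ) ^ 2 + ((j + 2 : ℕ) : ℝ) + 1) = (N : ℝ) := by rw [hN]; push_cast; ring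
  have hK2 : K ^ 2 + K + 1 = 0 := by
    have h0 : ((N : ℕ) : ZMod N) = 0 := ZMod.natCast_self N
    rw [hN] at h0
    rw [hKdef]
    push_cast at h0 ⊢
    linear_combination h0
  have alpha_eq : ∀ d : ℤ, alpha ((d : ℝ) / (((j + 2 : ℕ) : ℝ) ^ 2 + ((j + 2 : ℕ) : ℝ) + 1))
      ((d * ((j + 2 : ℕ)) : ℝ) / (((j + 2 : ℕ) : ℝ) ^ 2 + ((j + 2 : ℕ) : ℝ) + 1))
      = FF K ((d : ZMod N)) := by
    intro d
    rw [alpha, FF, hNr]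
    have e1 : ee ((d : ZMod N)) = EE N d := ee_int d
    have e2 : ee ((d : ZMod N) * K) = EE N (d * (j + 2)) := by
      rw [← ee_int (d * (j + 2))]; congr 1; rw [hKdef]; push_cast; ring
    have e3 : ee (-((d : ZMod N) * (K + 1))) = EE N (-(d * (j + 3))) := by
      rw [← ee_int (-(d * (j + 3)))]; congr 1; rw [hKdef]; push_cast; ring
    rw [e1, e2, e3, EE, EE, EE]
    congr 2
    · push_cast; ring
    · push_cast; ring
    · push_cast; field_simp; ring
  have hrange : {z : ℂ | ∃ d : ℤ, z = alpha ((d : ℝ) / (((j + 2 : ℕ) : ℝ) ^ 2 + ((j + 2 : ℕ) : ℝ) + 1))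
      ((d * ((j + 2 : ℕ)) : ℝ) / (((j + 2 : ℕ) : ℝ) ^ 2 + ((j + 2 : ℕ) : ℝ) + 1))} = Set.range (FF K) := by
    ext z
    simp only [Set.mem_setOf_eq, Set.mem_range]
    constructor
    · rintro ⟨d, rfl⟩; exact ⟨(d : ZMod N), (alpha_eq d).symm⟩
    · rintro ⟨x, rfl⟩
      exact ⟨(x.val : ℤ), by rw [alpha_eq, ee_cast_val]⟩
  have hcoe : Set.range (FF K) = ↑(Finset.univ.image (FF K)) := by
    simp [Finset.coe_image]
  rw [hrange, hcoe, Set.ncard_coe_finset]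
  have hσ : ∀ a : ZMod N, a * K * K * K = a := by
    intro a; linear_combination (a * (K - 1)) * hK2
  have hcard := count_three (FF K) (fun a => a * K) hσ (fun a b => fiber_C hK2 a b)
  have hfilter : (Finset.univ.filter fun a : ZMod N => a * K = a)
      = (Finset.univ.filter fun a : ZMod N => ((j + 1 : ℕ) : ZMod N) * a = 0) := by
    apply Finset.filter_congr
    intro a _
    have hJ : ((j + 1 : ℕ) : ZMod N) = K - 1 := by rw [hKdef]; push_cast; ring
    rw [hJ]
    constructor <;> intro h <;> linear_combination h
  have hfix : (Finset.univ.filter fun a : ZMod N => a * K = a).card = Nat.gcd (j + 1) 3 := by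
    rw [hfilter, card_fix]
    have h3 : N = 3 + (j + 1) * (j + 4) := by rw [hN]; ring
    rw [h3]
    exact Nat.gcd_add_mul_left_right (j + 1) 3 (j + 4)
  rw [ZMod.card, hfix] at hcard
  have hq := congrArg (fun t : ℕ => (t : ℚ)) hcard
  have h2 : ((N : ℕ) : ℚ) = (j : ℚ) ^ 2 + 5 * j + 7 := by rw [hN]; push_cast; ring
  have hg : j + 2 - 1 = j + 1 := by omega
  rw [eq_div_iff (by norm_num : (3:ℚ) ≠ 0), hg]
  push_cast at hq ⊢
  linarith

theorem card_B_and_C (k : ℕ) (hk : 2 ≤ k) :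
    (({z : ℂ | ∃ d : ℤ, z = alpha ((d : ℝ) / ((k : ℝ)^2 - 1))
        ((d * k : ℝ) / ((k : ℝ)^2 - 1))}).ncard : ℚ)
      = (((k : ℚ)^2 - 1) + ((k : ℚ) - 1)) / 2 ∧
    (({z : ℂ | ∃ d : ℤ, z = alpha ((d : ℝ) / ((k : ℝ)^2 + (k : ℝ) + 1))
        ((d * k : ℝ) / ((k : ℝ)^2 + (k : ℝ) + 1))}).ncard : ℚ)
      = (((k : ℚ)^2 + (k : ℚ) + 1) + 2 * (Nat.gcd (k - 1) 3 : ℚ)) / 3 := by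
  obtain ⟨j, rfl⟩ : ∃ j, k = j + 2 := ⟨k - 2, by omega⟩
  exact ⟨mainB j, mainC j⟩
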